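/- Quadratic KL bound under bounded score perturbation: Let ι be a nonempty finite type, s : ι → ℝ a score function, δ ≥ 0, and Δ : ι → ℝ with |Δᵢ| ≤ δ for all i. Let p = softmax(s) and q = softmax(s + Δ). Then KL(p‖q) = Σᵢ pᵢ·log(pᵢ/qᵢ) ≤ δ²/2. (This makes precise the claim, in the proof of the Relation-Dependency Faithfulness theorem, that the KL divergence between the true and estimated softmax distributions is bounded by a constant times the square of the pointwise approximation error of the scoring function.) -/

import Mathlib

open Finset Real

/-- Hoeffding-type bound for finite log-sum-exp. -/
lemma logsumexp_bound {ι : Type*} [Fintype ι] [Nonempty ι]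
    (p Δ : ι → ℝ) (hp : ∀ i, 0 < p i) (hp1 : ∑ i, p i = 1)
    (δ : ℝ) (hΔ : ∀ i, |Δ i| ≤ δ) :
    Real.log (∑ i, p i * Real.exp (Δ i)) ≤ (∑ i, p i * Δ i) + δ ^ 2 / 2 := by
  set m : ℝ := ∑ i, p i * Δ i with hm
  set S : ℝ → ℝ := fun t => ∑ i, p i * Real.exp (Δ i * t) with hSdef
  set S1 : ℝ → ℝ := fun t => ∑ i, p i * (Real.exp (Δ i * t) * Δ i) with hS1def
  set S2 : ℝ → ℝ := fun t => ∑ i, p i * (Real.exp (Δ i * t) * Δ i * Δ i) with hS2def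
  have hSpos : ∀ t, 0 < S t := fun t =>
    Finset.sum_pos (fun i _ => mul_pos (hp i) (Real.exp_pos _)) Finset.univ_nonempty
  have hS : ∀ t, HasDerivAt S (S1 t) t := by
    intro t
    have := HasDerivAt.fun_sum (fun i (_ : i ∈ Finset.univ) =>
      ((((hasDerivAt_id t).const_mul (Δ i)).exp).const_mul (p i) :
        HasDerivAt (fun u => p i * Real.exp (Δ i * u))
          (p i * (Real.exp (Δ i * t) * (Δ i * 1))) t))
    simpa [mul_one] using this
  have hS1 : ∀ t, HasDerivAt S1 (S2 t) t := by
    intro t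
    have := HasDerivAt.fun_sum (fun i (_ : i ∈ Finset.univ) =>
      (((((hasDerivAt_id t).const_mul (Δ i)).exp).mul_const (Δ i)).const_mul (p i) :
        HasDerivAt (fun u => p i * (Real.exp (Δ i * u) * Δ i))
          (p i * (Real.exp (Δ i * t) * (Δ i * 1) * Δ i)) t))
    simpa [mul_one] using this
  set h : ℝ → ℝ := fun t => m * t + δ ^ 2 * t ^ 2 / 2 - Real.log (S t) with hhdef
  set h' : ℝ → ℝ := fun t => m + δ ^ 2 * t - S1 t / S t with hh'def
  have hh : ∀ t, HasDerivAt h (h' t) t := by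
    intro t
    have h1 : HasDerivAt (fun t : ℝ => m * t) (m * 1) t := (hasDerivAt_id t).const_mul m
    have h2 : HasDerivAt (fun t : ℝ => δ ^ 2 * t ^ 2 / 2)
        (δ ^ 2 * (2 * t ^ 1) / 2) t :=
      ((hasDerivAt_pow 2 t).const_mul (δ ^ 2)).div_const 2
    have h3 : HasDerivAt (fun t => Real.log (S t)) (S1 t / S t) t :=
      (hS t).log (hSpos t).ne'
    have := (h1.add h2).sub h3
    refine this.congr_deriv ?_
    ring
  have hh' : ∀ t, HasDerivAt h' (δ ^ 2 - (S2 t * S t - S1 t * S1 t) / S t ^ 2) t := by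
    intro t
    have h1 : HasDerivAt (fun t : ℝ => m + δ ^ 2 * t) (δ ^ 2 * 1) t :=
      (((hasDerivAt_id t).const_mul (δ ^ 2))).const_add m
    have h2 : HasDerivAt (fun t => S1 t / S t)
        ((S2 t * S t - S1 t * S1 t) / S t ^ 2) t :=
      (hS1 t).div (hS t) (hSpos t).ne'
    have := h1.sub h2
    refine this.congr_deriv ?_
    ring
  have hderiv2 : ∀ t, 0 ≤ δ ^ 2 - (S2 t * S t - S1 t * S1 t) / S t ^ 2 := by
    intro t
    have hS2le : S2 t ≤ δ ^ 2 * S t := by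
      rw [hS2def, hSdef, Finset.mul_sum]
      apply Finset.sum_le_sum
      intro i _
      have hsq : Δ i ^ 2 ≤ δ ^ 2 := sq_le_sq' (neg_le_of_abs_le (hΔ i)) (le_of_abs_le (hΔ i))
      have : Real.exp (Δ i * t) * Δ i * Δ i ≤ δ ^ 2 * Real.exp (Δ i * t) := by
        have h0 : Real.exp (Δ i * t) * Δ i * Δ i = Δ i ^ 2 * Real.exp (Δ i * t) := by ring
        rw [h0]
        exact mul_le_mul_of_nonneg_right hsq (Real.exp_pos _).le
      calc p i * (Real.exp (Δ i * t) * Δ i * Δ i)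
          ≤ p i * (δ ^ 2 * Real.exp (Δ i * t)) :=
            mul_le_mul_of_nonneg_left this (hp i).le
        _ = δ ^ 2 * (p i * Real.exp (Δ i * t)) := by ring
    have hnum : S2 t * S t - S1 t * S1 t ≤ δ ^ 2 * S t ^ 2 := by
      have h1 : S2 t * S t ≤ δ ^ 2 * S t * S t :=
        mul_le_mul_of_nonneg_right hS2le (hSpos t).le
      nlinarith [mul_self_nonneg (S1 t)]
    have hS2pos : (0:ℝ) < S t ^ 2 := pow_pos (hSpos t) 2
    rw [sub_nonneg, div_le_iff₀ hS2pos]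
    nlinarith
  have hmono' : Monotone h' := by
    apply monotone_of_deriv_nonneg
    · exact fun t => (hh' t).differentiableAt
    · intro t
      rw [(hh' t).deriv]
      exact hderiv2 t
  have hS0 : S 0 = 1 := by simp [hSdef, hp1]
  have hS10 : S1 0 = m := by simp [hS1def, hm]
  have hh'0 : h' 0 = 0 := by simp [hh'def, hS0, hS10]
  have hmono : MonotoneOn h (Set.Icc (0:ℝ) 1) := by
    apply monotoneOn_of_deriv_nonneg (convex_Icc 0 1)
    · exact (Continuous.continuousOn (by
        have : Differentiable ℝ h := fun t => (hh t).differentiableAt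
        exact this.continuous))
    · intro t ht
      exact ((hh t).differentiableAt).differentiableWithinAt
    · intro t ht
      rw [(hh t).deriv]
      have : (0:ℝ) ≤ t := by
        simp only [interior_Icc, Set.mem_Ioo] at ht
        exact ht.1.le
      calc (0:ℝ) = h' 0 := hh'0.symm
        _ ≤ h' t := hmono' this
  have h01 : h 0 ≤ h 1 :=
    hmono (Set.mem_Icc.mpr ⟨le_refl 0, zero_le_one⟩)
      (Set.mem_Icc.mpr ⟨zero_le_one, le_refl 1⟩) zero_le_one
  have hh0 : h 0 = 0 := by simp [hhdef, hS0]
  have hh1 : h 1 = m + δ ^ 2 / 2 - Real.log (∑ i, p i * Real.exp (Δ i)) := by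
    simp [hhdef, hSdef]
  rw [hh0] at h01
  rw [hh1] at h01
  linarith

/-- The softmax distribution of a score function `s`. -/
noncomputable def softmax {ι : Type*} [Fintype ι] (s : ι → ℝ) : ι → ℝ :=
  fun i => Real.exp (s i) / ∑ j, Real.exp (s j)

theorem kl_softmax_perturbation_bound
    {ι : Type*} [Fintype ι] [Nonempty ι]
    (s : ι → ℝ) (δ : ℝ) (hδ : 0 ≤ δ) (Δ : ι → ℝ) (hΔ : ∀ i, |Δ i| ≤ δ) :
    ∑ i, softmax s i * Real.log (softmax s i / softmax (s + Δ) i) ≤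
      δ ^ 2 / 2 := by
  set Z : ℝ := ∑ j, Real.exp (s j) with hZdef
  set Z' : ℝ := ∑ j, Real.exp (s j + Δ j) with hZ'def
  have hZ : 0 < Z := Finset.sum_pos (fun i _ => Real.exp_pos _) Finset.univ_nonempty
  have hZ' : 0 < Z' := Finset.sum_pos (fun i _ => Real.exp_pos _) Finset.univ_nonempty
  have hp : ∀ i, 0 < softmax s i := fun i => div_pos (Real.exp_pos _) hZ
  have hp1 : ∑ i, softmax s i = 1 := by
    simp only [softmax, ← Finset.sum_div, ← hZdef]
    exact div_self hZ.ne'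
  have hT : Z' / Z = ∑ j, softmax s j * Real.exp (Δ j) := by
    rw [hZ'def, Finset.sum_div]
    apply Finset.sum_congr rfl
    intro j _
    rw [softmax, Real.exp_add]
    ring
  set T : ℝ := ∑ j, softmax s j * Real.exp (Δ j) with hTdef
  have hTpos : 0 < T := by rw [← hT]; positivity
  have hratio : ∀ i, Real.log (softmax s i / softmax (s + Δ) i) = -Δ i + Real.log T := by
    intro i
    have hq : softmax (s + Δ) i = Real.exp (s i + Δ i) / Z' := by
      simp [softmax, hZ'def]
    rw [hq, softmax, ← hZdef]
    rw [Real.log_div (by positivity) (by positivity),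
        Real.log_div (Real.exp_ne_zero _) hZ.ne',
        Real.log_div (Real.exp_ne_zero _) hZ'.ne',
        Real.log_exp, Real.log_exp]
    have : Real.log T = Real.log Z' - Real.log Z := by
      rw [← hT, Real.log_div hZ'.ne' hZ.ne']
    rw [this]
    ring
  have hsum : ∑ i, softmax s i * Real.log (softmax s i / softmax (s + Δ) i)
      = -(∑ i, softmax s i * Δ i) + Real.log T := by
    calc ∑ i, softmax s i * Real.log (softmax s i / softmax (s + Δ) i)
        = ∑ i, (softmax s i * (-Δ i) + softmax s i * Real.log T) := by
          apply Finset.sum_congr rfl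
          intro i _
          rw [hratio i]
          ring
      _ = -(∑ i, softmax s i * Δ i) + (∑ i, softmax s i) * Real.log T := by
          rw [Finset.sum_add_distrib, ← Finset.sum_mul, ← Finset.sum_neg_distrib]
          congr 1
          apply Finset.sum_congr rfl
          intro i _
          ring
      _ = -(∑ i, softmax s i * Δ i) + Real.log T := by rw [hp1, one_mul]
  rw [hsum]
  have hbound := logsumexp_bound (softmax s) Δ hp hp1 δ hΔ
  rw [← hTdef] at hbound
  linarith
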